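/- Let $y : [0,\infty) \to (0,\infty)$ be a positive $C^1$ function, and suppose $[0,\infty)$ is partitioned into consecutive intervals alternating between 'fast' intervals of length at most $t_0$ on which $|y'(t)| \le A\, y(t)$, and 'slow' intervals of length at least $d$ on which $|y'(t)| \le \frac{\epsilon}{2} y(t)$, starting with either type. Then $\limsup_{t\to\infty} \frac{1}{2t}\log y(t) \le \frac{A t_0}{2d} + \frac{\epsilon}{4}$. -/

import Mathlib

open Filter Real Topology

/-- Averaging argument: if `[0,∞)` is partitioned into consecutive intervals alternating
between "fast" intervals of length at most `t₀` on which `|y'| ≤ A y` and "slow" intervals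
of length at least `d` on which `|y'| ≤ (ε/2) y`, then the exponential growth rate
`limsup (1/2t) log y(t)` is at most `A t₀ / (2 d) + ε / 4`. -/
theorem averaging_growth_bound (y : ℝ → ℝ) (A t₀ d ε : ℝ)
    (hA : 0 ≤ A) (ht₀ : 0 < t₀) (hd : 0 < d) (hε : 0 < ε)
    (hpos : ∀ t, 0 ≤ t → 0 < y t)
    (hdiff : ∀ t, 0 ≤ t → DifferentiableAt ℝ y t)
    (a : ℕ → ℝ) (ha0 : a 0 = 0) (hmono : StrictMono a)
    (htop : Tendsto a atTop atTop)
    (fast : ℕ → Bool)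
    (halt : ∀ n, fast (n + 1) = !fast n)
    (hfast : ∀ n, fast n = true →
      a (n + 1) - a n ≤ t₀ ∧
        ∀ t ∈ Set.Icc (a n) (a (n + 1)), |deriv y t| ≤ A * y t)
    (hslow : ∀ n, fast n = false →
      d ≤ a (n + 1) - a n ∧
        ∀ t ∈ Set.Icc (a n) (a (n + 1)), |deriv y t| ≤ (ε / 2) * y t) :
    limsup (fun t : ℝ => Real.log (y t) / (2 * t)) atTop ≤
      A * t₀ / (2 * d) + ε / 4 := by
  classical
  set g : ℝ → ℝ := fun t => Real.log (y t) with hgdef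
  have haneg : ∀ n, 0 ≤ a n := fun n => ha0 ▸ hmono.monotone (Nat.zero_le n)
  -- key interval estimate
  have key : ∀ p q c : ℝ, 0 ≤ p → p ≤ q → 0 ≤ c →
      (∀ t ∈ Set.Icc p q, |deriv y t| ≤ c * y t) →
      ∀ x ∈ Set.Icc p q, |g x - g p| ≤ c * (x - p) := by
    intro p q c hp hpq hc hb x hx
    have h := norm_image_sub_le_of_norm_deriv_le_segment'
      (f := g) (f' := fun t => deriv y t / y t) (a := p) (b := q) (C := c) ?_ ?_ x hx
    · simpa using h
    · intro t ht
      have ht0 : (0:ℝ) ≤ t := le_trans hp ht.1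
      have h1 : HasDerivAt y (deriv y t) t := (hdiff t ht0).hasDerivAt
      have h2 := (Real.hasDerivAt_log (ne_of_gt (hpos t ht0))).comp t h1
      have h3 : HasDerivAt g (deriv y t / y t) t := by
        rw [div_eq_inv_mul]; exact h2
      exact h3.hasDerivWithinAt
    · intro t ht
      have ht0 : (0:ℝ) ≤ t := le_trans hp ht.1
      have hy := hpos t ht0
      rw [Real.norm_eq_abs, abs_div, abs_of_pos hy, div_le_iff₀ hy]
      exact hb t (Set.Ico_subset_Icc_self ht)
  -- counting functions
  set fc : ℕ → ℕ := fun N => ∑ n ∈ Finset.range N, (if fast n then 1 else 0) with hfcdef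
  set sc : ℕ → ℕ := fun N => ∑ n ∈ Finset.range N, (if fast n then 0 else 1) with hscdef
  have hfc_succ : ∀ N, fc (N+1) = fc N + (if fast N then 1 else 0) := fun N =>
    Finset.sum_range_succ _ N
  have hsc_succ : ∀ N, sc (N+1) = sc N + (if fast N then 0 else 1) := fun N =>
    Finset.sum_range_succ _ N
  have hcount : ∀ N, fc N ≤ sc N + (if fast N then 0 else 1) := by
    intro N
    induction N with
    | zero => by_cases h : fast 0 <;> simp [hfcdef, hscdef, h]
    | succ N ih =>
      rw [hfc_succ, hsc_succ, halt N]
      by_cases h : fast N <;> simp [h] at ih ⊢ <;> omega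
  have hcount' : ∀ N, fc N ≤ sc N + 1 := by
    intro N
    have := hcount N
    by_cases h : fast N <;> simp [h] at this <;> omega
  have hsc_le : ∀ N, (sc N : ℝ) * d ≤ a N := by
    intro N
    have h1 : ∑ n ∈ Finset.range N, (a (n+1) - a n) = a N := by
      rw [Finset.sum_range_sub a N, ha0, sub_zero]
    have h2 : ∀ n ∈ Finset.range N,
        ((if fast n then 0 else 1 : ℕ) : ℝ) * d ≤ a (n+1) - a n := by
      intro n _
      by_cases h : fast n
      · have := (hmono (Nat.lt_succ_self n)).le
        simp [h]; linarith
      · have := (hslow n (by simpa using h)).1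
        simp [h]; linarith
    calc (sc N : ℝ) * d = ∑ n ∈ Finset.range N, ((if fast n then 0 else 1 : ℕ) : ℝ) * d := by
          rw [hscdef]; push_cast; rw [Finset.sum_mul]
      _ ≤ ∑ n ∈ Finset.range N, (a (n+1) - a n) := Finset.sum_le_sum h2
      _ = a N := h1
  -- main induction
  have main : ∀ N, ∀ t ∈ Set.Icc (a N) (a (N+1)),
      |g t - g 0| ≤ A * t₀ * (fc (N+1) : ℝ) + (ε/2) * t := by
    intro N
    induction N with
    | zero =>
      intro t ht
      have ht0 : (0:ℝ) ≤ t := by rw [← ha0]; exact ht.1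
      have h01 : a 0 ≤ a 1 := (hmono (Nat.lt_succ_self 0)).le
      have hεt : 0 ≤ (ε/2) * t := mul_nonneg (by linarith) ht0
      by_cases h : fast 0
      · obtain ⟨hlen, hb⟩ := hfast 0 h
        have hk := key (a 0) (a 1) A (haneg 0) h01 hA hb t ht
        have h2 : t - a 0 ≤ t₀ := by
          have := ht.2; linarith
        have h3 : A * (t - a 0) ≤ A * t₀ := mul_le_mul_of_nonneg_left h2 hA
        have hfc1 : (fc 1 : ℝ) = 1 := by simp [hfcdef, Finset.sum_range_one, Finset.filter_singleton, h]
        rw [ha0] at hk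
        rw [hfc1]
        calc |g t - g 0| ≤ A * (t - 0) := hk
          _ ≤ A * t₀ := by rw [← ha0]; simpa [ha0] using h3
          _ ≤ A * t₀ * 1 + (ε/2) * t := by linarith
      · obtain ⟨hlen, hb⟩ := hslow 0 (by simpa using h)
        have hk := key (a 0) (a 1) (ε/2) (haneg 0) h01 (by linarith) hb t ht
        have hfc1 : (fc 1 : ℝ) = 0 := by simp [hfcdef, Finset.sum_range_one, Finset.filter_singleton, h]
        rw [ha0] at hk
        rw [hfc1]
        calc |g t - g 0| ≤ (ε/2) * (t - 0) := hk
          _ ≤ A * t₀ * 0 + (ε/2) * t := by linarith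
    | succ N ih =>
      intro t ht
      have hstep : a (N+1) ≤ a (N+2) := (hmono (Nat.lt_succ_self (N+1))).le
      have hprev : a N ≤ a (N+1) := (hmono (Nat.lt_succ_self N)).le
      have h0 : (0:ℝ) ≤ a (N+1) := haneg (N+1)
      have hIH := ih (a (N+1)) ⟨hprev, le_refl _⟩
      have htri : |g t - g 0| ≤ |g t - g (a (N+1))| + |g (a (N+1)) - g 0| := by
        have := abs_sub_le (g t) (g (a (N+1))) (g 0); linarith
      have haN1t : a (N+1) ≤ t := ht.1
      by_cases h : fast (N+1)
      · obtain ⟨hlen, hb⟩ := hfast (N+1) h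
        have hk := key (a (N+1)) (a (N+2)) A h0 hstep hA hb t ht
        have h2 : t - a (N+1) ≤ t₀ := by have := ht.2; linarith
        have h3 : A * (t - a (N+1)) ≤ A * t₀ := mul_le_mul_of_nonneg_left h2 hA
        have hfc2 : (fc (N+2) : ℝ) = (fc (N+1) : ℝ) + 1 := by
          rw [hfc_succ (N+1)]; simp [h]
        have hε1 : (ε/2) * a (N+1) ≤ (ε/2) * t :=
          mul_le_mul_of_nonneg_left haN1t (by linarith)
        rw [hfc2]
        nlinarith [hk, hIH, htri]
      · obtain ⟨hlen, hb⟩ := hslow (N+1) (by simpa using h)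
        have hk := key (a (N+1)) (a (N+2)) (ε/2) h0 hstep (by linarith) hb t ht
        have hfc2 : (fc (N+2) : ℝ) = (fc (N+1) : ℝ) := by
          rw [hfc_succ (N+1)]; simp [h]
        rw [hfc2]
        nlinarith [hk, hIH, htri]
  -- global bound
  have glob : ∀ t : ℝ, 0 ≤ t → |g t - g 0| ≤ A * t₀ * (t/d + 2) + (ε/2) * t := by
    intro t ht
    have hex : ∃ m, t < a m := ((htop.eventually (eventually_gt_atTop t)).exists)
    set M := Nat.find hex with hMdef
    have hM : t < a M := Nat.find_spec hex
    have hM0 : M ≠ 0 := by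
      intro h; rw [h, ha0] at hM; linarith
    obtain ⟨N, hNM⟩ := Nat.exists_eq_succ_of_ne_zero hM0
    have hN : a N ≤ t := by
      by_contra hcon
      exact Nat.find_min hex (by omega : N < M) (not_le.1 hcon)
    have htlt : t < a (N+1) := by rw [hNM] at hM; exact hM
    have htIcc : t ∈ Set.Icc (a N) (a (N+1)) := ⟨hN, le_of_lt htlt⟩
    have h1 := main N t htIcc
    -- bound fc (N+1)
    have h2 : (fc (N+1) : ℝ) ≤ t/d + 2 := by
      have hc1 : fc (N+1) ≤ sc (N+1) + 1 := hcount' (N+1)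
      have hc2 : sc (N+1) ≤ sc N + 1 := by
        rw [hsc_succ N]; by_cases h : fast N <;> simp [h]
      have hc3 : (sc N : ℝ) ≤ t / d := by
        rw [le_div_iff₀ hd]
        exact le_trans (hsc_le N) hN
      have : (fc (N+1) : ℝ) ≤ (sc N : ℝ) + 2 := by
        have : fc (N+1) ≤ sc N + 2 := by omega
        exact_mod_cast this
      linarith
    have h3 : A * t₀ * (fc (N+1) : ℝ) ≤ A * t₀ * (t/d + 2) :=
      mul_le_mul_of_nonneg_left h2 (mul_nonneg hA ht₀.le)
    linarith
  -- limsup argument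
  set C : ℝ := A * t₀ / (2 * d) + ε / 4 with hCdef
  set K : ℝ := |g 0| + 2 * (A * t₀) with hKdef
  have hK0 : 0 ≤ K := by
    have := abs_nonneg (g 0)
    have := mul_nonneg hA ht₀.le
    rw [hKdef]; linarith
  set h : ℝ → ℝ := fun t => K / (2 * t) + C with hhdef
  have hub : ∀ t : ℝ, 0 < t → |g t| / (2 * t) ≤ h t := by
    intro t ht
    have h1 := glob t ht.le
    have h2 : |g t| ≤ |g t - g 0| + |g 0| := by
      have := abs_sub_abs_le_abs_sub (g t) (g 0); linarith
    have h3 : |g t| ≤ K + (A * t₀ / d + ε/2) * t := by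
      have hexp : A * t₀ * (t/d + 2) = (A * t₀ / d) * t + 2 * (A * t₀) := by
        field_simp
      rw [hKdef]
      calc |g t| ≤ |g t - g 0| + |g 0| := h2
        _ ≤ A * t₀ * (t/d + 2) + (ε/2) * t + |g 0| := by linarith
        _ = |g 0| + 2 * (A * t₀) + (A * t₀ / d + ε/2) * t := by rw [hexp]; ring
    have h2t : (0:ℝ) < 2 * t := by linarith
    rw [hhdef]
    simp only []
    have hCt : C * (2 * t) = (A * t₀ / d + ε/2) * t := by
      rw [hCdef]; field_simp; ring
    rw [div_le_iff₀ h2t]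
    have hexp2 : (K / (2 * t) + C) * (2 * t) = K + C * (2 * t) := by
      field_simp
    rw [hexp2, hCt]
    linarith
  have hh_tendsto : Tendsto h atTop (𝓝 C) := by
    have h1 : Tendsto (fun t : ℝ => K / (2 * t)) atTop (𝓝 0) := by
      apply Tendsto.div_atTop tendsto_const_nhds
      exact Tendsto.const_mul_atTop (by norm_num : (0:ℝ) < 2) tendsto_id
    have := h1.add (tendsto_const_nhds (x := C))
    simpa [hhdef] using this
  have hev : ∀ᶠ t : ℝ in atTop, g t / (2 * t) ≤ h t := by
    filter_upwards [eventually_gt_atTop (0:ℝ)] with t ht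
    have h1 := hub t ht
    have h2 : g t / (2 * t) ≤ |g t| / (2 * t) :=
      div_le_div_of_nonneg_right (le_abs_self _) (by linarith) |>.trans_eq rfl
    linarith
  have hev2 : ∀ᶠ t : ℝ in atTop, -(h t) ≤ g t / (2 * t) := by
    filter_upwards [eventually_gt_atTop (0:ℝ)] with t ht
    have h1 := hub t ht
    have h2 : -(|g t| / (2 * t)) ≤ g t / (2 * t) := by
      rw [← neg_div]
      exact div_le_div_of_nonneg_right (neg_abs_le _) (by linarith) |>.trans_eq rfl
    linarith
  have hcob : IsCoboundedUnder (· ≤ ·) atTop (fun t : ℝ => g t / (2 * t)) := by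
    apply isCoboundedUnder_le_of_eventually_le (l := atTop) (x := -C - 1)
    have hlow : ∀ᶠ t : ℝ in atTop, -C - 1 ≤ -(h t) := by
      have : ∀ᶠ t : ℝ in atTop, h t ≤ C + 1 :=
        hh_tendsto.eventually_le_const (by linarith)
      filter_upwards [this] with t ht; linarith
    filter_upwards [hlow, hev2] with t h1 h2
    exact le_trans h1 h2
  have hbdd : IsBoundedUnder (· ≤ ·) atTop h := hh_tendsto.isBoundedUnder_le
  calc limsup (fun t : ℝ => Real.log (y t) / (2 * t)) atTop
      = limsup (fun t : ℝ => g t / (2 * t)) atTop := rfl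
    _ ≤ limsup h atTop := limsup_le_limsup hev hcob hbdd
    _ = C := hh_tendsto.limsup_eq
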